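/- arXiv:1402.5212 — 3 statements merged into one kernel-verified Lean document; each statement's English description precedes it below -/
import Mathlib

section
/- Pairwise intersection lemma: Let (X, B, μ) be a probability space (μ(X) = 1), let 0 < ε ≤ 1/2, and let ⟨A_i : i ∈ ℕ⟩ be a sequence of measurable sets with μ(A_i) ≥ ε for every i. Then there exist indices i < j such that μ(A_i ∩ A_j) ≥ ε³. -/
open MeasureTheory

theorem pairwise_intersection_lemma {X : Type*} [MeasurableSpace X] (μ : Measure X)
    [IsProbabilityMeasure μ] (ε : ℝ) (h0 : 0 < ε) (h1 : ε ≤ 1 / 2)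
    (A : ℕ → Set X) (hA : ∀ i, MeasurableSet (A i))
    (hε : ∀ i, (μ (A i)).toReal ≥ ε) :
    ∃ i j : ℕ, i < j ∧ (μ (A i ∩ A j)).toReal ≥ ε ^ 3 := by
  by_contra hcon
  push_neg at hcon
  -- Bonferroni lower bound
  have hmain : ∀ n : ℕ, (n : ℝ) * ε - ε ^ 3 * ∑ j ∈ Finset.range n, (j : ℝ)
      ≤ (μ (⋃ i ∈ Finset.range n, A i)).toReal := by
    intro n
    induction n with
    | zero => simp
    | succ n ih =>
      have hmeasS : MeasurableSet (⋃ i ∈ Finset.range n, A i) :=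
        MeasurableSet.biUnion (Finset.range n).countable_toSet (fun i _ => hA i)
      have hun : (⋃ i ∈ Finset.range (n+1), A i) = A n ∪ ⋃ i ∈ Finset.range n, A i := by
        rw [Finset.range_add_one]
        simp [Set.biUnion_insert]
      have hkey := measure_union_add_inter (μ := μ) (A n) hmeasS
      have hkeyR : (μ (A n ∪ ⋃ i ∈ Finset.range n, A i)).toReal
          + (μ (A n ∩ ⋃ i ∈ Finset.range n, A i)).toReal
          = (μ (A n)).toReal + (μ (⋃ i ∈ Finset.range n, A i)).toReal := by
        rw [← ENNReal.toReal_add (measure_ne_top μ _) (measure_ne_top μ _),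
          ← ENNReal.toReal_add (measure_ne_top μ _) (measure_ne_top μ _), hkey]
      have hinter : (μ (A n ∩ ⋃ i ∈ Finset.range n, A i)).toReal ≤ (n : ℝ) * ε ^ 3 := by
        have heq : A n ∩ (⋃ i ∈ Finset.range n, A i) = ⋃ i ∈ Finset.range n, (A i ∩ A n) := by
          ext x
          simp only [Set.mem_inter_iff, Set.mem_iUnion]
          tauto
        rw [heq]
        calc (μ (⋃ i ∈ Finset.range n, (A i ∩ A n))).toReal
            ≤ (∑ i ∈ Finset.range n, μ (A i ∩ A n)).toReal := by
              apply ENNReal.toReal_mono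
              · exact (ENNReal.sum_lt_top.mpr (fun i _ => measure_lt_top μ _)).ne
              · exact measure_biUnion_finset_le _ _
          _ = ∑ i ∈ Finset.range n, (μ (A i ∩ A n)).toReal :=
              ENNReal.toReal_sum (fun i _ => measure_ne_top μ _)
          _ ≤ ∑ i ∈ Finset.range n, ε ^ 3 := by
              apply Finset.sum_le_sum
              intro i hi
              exact le_of_lt (hcon i n (Finset.mem_range.mp hi))
          _ = (n : ℝ) * ε ^ 3 := by simp [mul_comm]
      have hAn := hε n
      rw [hun]
      have : (μ (A n ∪ ⋃ i ∈ Finset.range n, A i)).toReal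
          ≥ (μ (A n)).toReal + (μ (⋃ i ∈ Finset.range n, A i)).toReal
            - (n : ℝ) * ε ^ 3 := by linarith
      rw [Finset.sum_range_succ]
      push_cast
      nlinarith [this]
  -- Choose n
  set n : ℕ := ⌈1 / ε ^ 2⌉₊ with hn
  have hε2 : (0:ℝ) < 1 / ε ^ 2 := by positivity
  have hn1 : 1 / ε ^ 2 ≤ (n : ℝ) := Nat.le_ceil _
  have hn2 : (n : ℝ) < 1 / ε ^ 2 + 1 := Nat.ceil_lt_add_one hε2.le
  have hgauss : ∑ j ∈ Finset.range n, (j : ℝ) = (n : ℝ) * ((n : ℝ) - 1) / 2 := by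
    induction n with
    | zero => simp
    | succ m ihm =>
      rw [Finset.sum_range_succ, ihm]
      push_cast
      ring
  have hle1 : (μ (⋃ i ∈ Finset.range n, A i)).toReal ≤ 1 := by
    have h := prob_le_one (μ := μ) (s := ⋃ i ∈ Finset.range n, A i)
    have := ENNReal.toReal_mono (by simp) h
    simpa using this
  have hb := hmain n
  rw [hgauss] at hb
  -- final arithmetic contradiction
  have hnge : (1:ℝ) ≤ (n:ℝ) * ε ^ 2 := by
    rw [div_le_iff₀ (by positivity)] at hn1
    linarith
  have hnlt : ((n:ℝ) - 1) * ε ^ 2 < 1 := by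
    have : (n:ℝ) - 1 < 1 / ε ^ 2 := by linarith
    calc ((n:ℝ) - 1) * ε ^ 2 < (1 / ε ^ 2) * ε ^ 2 := by
          apply mul_lt_mul_of_pos_right this (by positivity)
      _ = 1 := by field_simp
  have hεle : 2 * ε ≤ 1 := by linarith
  -- n ε - ε³ n(n-1)/2 > n ε / 2 ≥ 1/(2 ε) ≥ 1, contradiction with ≤ 1
  nlinarith [hb, hle1, hnge, hnlt, hεle, h0, mul_pos h0 h0,
    mul_le_mul_of_nonneg_left hεle (le_of_lt (mul_pos (show (0:ℝ) < (n:ℝ)*ε/2 by nlinarith) h0))]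
end

section
/- k-fold intersection lemma: Let (X, B, μ) be a probability space, 0 < ε ≤ 1/2, and ⟨A_i : i ∈ ℕ⟩ a sequence of measurable sets with μ(A_i) ≥ ε for all i. Then for every k ≥ 1 there exist indices i₁ < i₂ < ⋯ < i_k such that μ(A_{i₁} ∩ ⋯ ∩ A_{i_k}) ≥ ε^(3^(k−1)). -/
open MeasureTheory
open scoped ENNReal

lemma sq_lintegral_le_lintegral_sq {X : Type*} [MeasurableSpace X] (μ : Measure X)
    [IsProbabilityMeasure μ] (f : X → ℝ≥0∞) (hf : Measurable f) :
    (∫⁻ x, f x ∂μ) ^ 2 ≤ ∫⁻ x, f x ^ 2 ∂μ := by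
  have hpq : Real.HolderConjugate 2 2 := Real.holderConjugate_iff.2 ⟨by norm_num, by norm_num⟩
  have h := ENNReal.lintegral_mul_le_Lp_mul_Lq μ hpq hf.aemeasurable
    (aemeasurable_const (b := (1 : ℝ≥0∞)))
  simp only [Pi.mul_apply, Pi.one_apply, mul_one, ENNReal.one_rpow, lintegral_one,
    measure_univ, ENNReal.one_rpow] at h
  have h2 : (∫⁻ x, f x ∂μ) ^ (2 : ℝ) ≤ ((∫⁻ a, f a ^ (2:ℝ) ∂μ) ^ (1/2 : ℝ)) ^ (2:ℝ) :=
    ENNReal.rpow_le_rpow h (by norm_num)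
  rw [← ENNReal.rpow_natCast _ 2] at *
  rw [← ENNReal.rpow_mul] at h2
  norm_num at h2 ⊢
  exact h2

lemma pair_lemma {X : Type*} [MeasurableSpace X] (μ : Measure X)
    [IsProbabilityMeasure μ] (B : ℕ → Set X) (hB : ∀ m, MeasurableSet (B m))
    {ε : ℝ} (h0 : 0 < ε) (h1 : ε ≤ 1 / 2) (hε : ∀ m, ε ≤ (μ (B m)).toReal) (m0 : ℕ) :
    ∃ i j, m0 ≤ i ∧ i < j ∧ ε ^ 3 ≤ (μ (B i ∩ B j)).toReal := by
  by_contra hcon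
  push_neg at hcon
  -- all pairwise intersections (with distinct indices ≥ m0) are < ε^3
  have hpair : ∀ i j, i ≠ j → (μ (B (m0 + i) ∩ B (m0 + j))).toReal < ε ^ 3 := by
    intro i j hij
    rcases hij.lt_or_gt with h | h
    · exact hcon _ _ (Nat.le_add_right _ _) (by omega)
    · rw [Set.inter_comm]
      exact hcon _ _ (Nat.le_add_right _ _) (by omega)
  set n : ℕ := ⌈2 / ε ^ 2⌉₊ + 1 with hn_def
  have hn : 2 / ε ^ 2 < (n : ℝ) := by
    have := Nat.le_ceil (2 / ε ^ 2)
    push_cast [hn_def]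
    linarith
  have hn1 : 1 ≤ n := Nat.le_add_left 1 _
  set g : ℕ → X → ℝ≥0∞ := fun i => (B (m0 + i)).indicator 1 with hg_def
  have hgmeas : ∀ i, Measurable (g i) := fun i => (measurable_one).indicator (hB _)
  set f : X → ℝ≥0∞ := fun x => ∑ i ∈ Finset.range n, g i x with hf_def
  have hfmeas : Measurable f := Finset.measurable_sum _ fun i _ => hgmeas i
  -- lower bound for ∫ f
  have hintf : (∫⁻ x, f x ∂μ) = ∑ i ∈ Finset.range n, μ (B (m0 + i)) := by
    rw [lintegral_finset_sum _ fun i _ => hgmeas i]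
    simp [hg_def, lintegral_indicator_one (hB _)]
  -- ∫ f² = double sum of intersection measures
  have hintf2 : (∫⁻ x, f x ^ 2 ∂μ)
      = ∑ i ∈ Finset.range n, ∑ j ∈ Finset.range n, μ (B (m0 + i) ∩ B (m0 + j)) := by
    have hptwise : ∀ x, f x ^ 2 = ∑ i ∈ Finset.range n, ∑ j ∈ Finset.range n,
        ((B (m0 + i) ∩ B (m0 + j)).indicator (1 : X → ℝ≥0∞)) x := by
      intro x
      rw [sq, hf_def, Finset.sum_mul_sum]
      refine Finset.sum_congr rfl fun i _ => Finset.sum_congr rfl fun j _ => ?_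
      rw [Set.inter_indicator_one]
      rfl
    simp_rw [hptwise]
    rw [lintegral_finset_sum _ fun i _ => Finset.measurable_sum _
      fun j _ => measurable_one.indicator ((hB _).inter (hB _))]
    refine Finset.sum_congr rfl fun i _ => ?_
    rw [lintegral_finset_sum _ fun j _ => measurable_one.indicator ((hB _).inter (hB _))]
    simp [lintegral_indicator_one ((hB _).inter (hB _))]
  set S : ℝ := ∑ i ∈ Finset.range n, ∑ j ∈ Finset.range n,
    (μ (B (m0 + i) ∩ B (m0 + j))).toReal with hS_def
  have hne : ∀ i j : ℕ, μ (B (m0 + i) ∩ B (m0 + j)) ≠ ⊤ := fun i j => measure_ne_top _ _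
  have hSsum : ((∑ i ∈ Finset.range n, ∑ j ∈ Finset.range n,
      μ (B (m0 + i) ∩ B (m0 + j))) : ℝ≥0∞).toReal = S := by
    rw [ENNReal.toReal_sum (fun i _ => by
      exact (ENNReal.sum_lt_top.2 fun j _ => (hne i j).lt_top).ne)]
    exact Finset.sum_congr rfl fun i _ =>
      ENNReal.toReal_sum fun j _ => hne i j
  -- lower bound on S
  have hCS := sq_lintegral_le_lintegral_sq μ f hfmeas
  have hlow : ((n : ℝ) * ε) ^ 2 ≤ S := by
    have h1' : (ENNReal.ofReal ((n : ℝ) * ε)) ^ 2 ≤ (∫⁻ x, f x ∂μ) ^ 2 := by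
      refine pow_le_pow_left' ?_ 2
      rw [hintf]
      calc ENNReal.ofReal ((n : ℝ) * ε) = ∑ _i ∈ Finset.range n, ENNReal.ofReal ε := by
            rw [Finset.sum_const, Finset.card_range, nsmul_eq_mul,
              ← ENNReal.ofReal_natCast, ← ENNReal.ofReal_mul (by positivity)]
        _ ≤ ∑ i ∈ Finset.range n, μ (B (m0 + i)) := by
            refine Finset.sum_le_sum fun i _ => ?_
            rw [← ENNReal.ofReal_toReal (measure_ne_top μ _)]
            exact ENNReal.ofReal_le_ofReal (hε _)
    have h2' := h1'.trans (hCS.trans_eq hintf2)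
    have hfin : (∑ i ∈ Finset.range n, ∑ j ∈ Finset.range n,
        μ (B (m0 + i) ∩ B (m0 + j))) ≠ ⊤ :=
      (ENNReal.sum_lt_top.2 fun i _ => ENNReal.sum_lt_top.2 fun j _ => (hne i j).lt_top).ne
    have h3' := ENNReal.toReal_mono hfin h2'
    rw [hSsum, ENNReal.toReal_pow, ENNReal.toReal_ofReal (by positivity)] at h3'
    exact h3'
  -- upper bound on S
  have hupp : S ≤ (n : ℝ) + (n : ℝ) ^ 2 * ε ^ 3 := by
    have hterm : ∀ i ∈ Finset.range n, ∀ j ∈ Finset.range n,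
        (μ (B (m0 + i) ∩ B (m0 + j))).toReal
          ≤ (if i = j then (1 : ℝ) else 0) + ε ^ 3 := by
      intro i _ j _
      by_cases hij : i = j
      · rw [if_pos hij]
        have hle1 : μ (B (m0 + i) ∩ B (m0 + j)) ≤ 1 := prob_le_one
        have h' := ENNReal.toReal_mono (by simp) hle1
        simp only [ENNReal.toReal_one] at h'
        nlinarith [pow_pos h0 3]
      · simp only [if_neg hij, zero_add]
        exact (hpair i j hij).le
    calc S ≤ ∑ i ∈ Finset.range n, ∑ j ∈ Finset.range n,
          ((if i = j then (1 : ℝ) else 0) + ε ^ 3) := by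
          exact Finset.sum_le_sum fun i hi => Finset.sum_le_sum fun j hj => hterm i hi j hj
      _ = ∑ _i ∈ Finset.range n, (1 + (n : ℝ) * ε ^ 3) := by
          refine Finset.sum_congr rfl fun i hi => ?_
          rw [Finset.sum_add_distrib, Finset.sum_ite_eq, if_pos hi,
            Finset.sum_const, Finset.card_range, nsmul_eq_mul]
      _ = (n : ℝ) + (n : ℝ) ^ 2 * ε ^ 3 := by
          rw [Finset.sum_const, Finset.card_range, nsmul_eq_mul]
          ring
  -- contradiction
  have hne2 : (0:ℝ) < ε ^ 2 := by positivity
  have h2n : 2 < (n : ℝ) * ε ^ 2 := by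
    rw [div_lt_iff₀ hne2] at hn
    linarith
  have hnpos : (0:ℝ) < n := by exact_mod_cast hn1
  have hcube : ε ^ 3 ≤ ε ^ 2 / 2 := by nlinarith [sq_nonneg ε]
  have hkey : (n : ℝ) ^ 2 * ε ^ 3 ≤ (n : ℝ) ^ 2 * (ε ^ 2 / 2) :=
    mul_le_mul_of_nonneg_left hcube (sq_nonneg _)
  have hlow' : (n : ℝ) ^ 2 * ε ^ 2 ≤ S := by rw [mul_pow] at hlow; exact hlow
  nlinarith [mul_lt_mul_of_pos_left h2n hnpos]
lemma step_lemma {X : Type*} [MeasurableSpace X] (μ : Measure X)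
    [IsProbabilityMeasure μ] (A : ℕ → Set X) (hA : ∀ i, MeasurableSet (A i))
    {ε : ℝ} (h0 : 0 < ε) (h1 : ε ≤ 1 / 2) (c : ℕ) (T : ℕ → Finset ℕ)
    (hcard : ∀ m, (T m).card = c)
    (hord : ∀ m m', m < m' → ∀ i ∈ T m, ∀ j ∈ T m', i < j)
    (hmeas : ∀ m, ε ≤ (μ (⋂ i ∈ (T m : Set ℕ), A i)).toReal) :
    ∃ T' : ℕ → Finset ℕ, (∀ m, (T' m).card = 2 * c) ∧
      (∀ m m', m < m' → ∀ i ∈ T' m, ∀ j ∈ T' m', i < j) ∧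
      ∀ m, ε ^ 3 ≤ (μ (⋂ i ∈ (T' m : Set ℕ), A i)).toReal := by
  set B : ℕ → Set X := fun m => ⋂ i ∈ (T m : Set ℕ), A i with hB_def
  have hB : ∀ m, MeasurableSet (B m) := fun m =>
    MeasurableSet.biInter (Set.to_countable _) fun i _ => hA i
  have hp : ∀ m0 : ℕ, ∃ p : ℕ × ℕ, m0 ≤ p.1 ∧ p.1 < p.2 ∧
      ε ^ 3 ≤ (μ (B p.1 ∩ B p.2)).toReal := by
    intro m0
    obtain ⟨i, j, h₁, h₂, h₃⟩ := pair_lemma μ B hB h0 h1 hmeas m0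
    exact ⟨(i, j), h₁, h₂, h₃⟩
  choose F hF1 hF2 hF3 using hp
  set r : ℕ → ℕ × ℕ := fun m => Nat.rec (F 0) (fun _ p => F (p.2 + 1)) m with hr_def
  have hr0 : r 0 = F 0 := rfl
  have hrs : ∀ m, r (m + 1) = F ((r m).2 + 1) := fun m => rfl
  have hrF : ∀ m, ∃ m0, r m = F m0 := by
    intro m
    cases m with
    | zero => exact ⟨0, rfl⟩
    | succ m => exact ⟨_, rfl⟩
  have hlt : ∀ m, (r m).1 < (r m).2 := by
    intro m
    cases m with
    | zero => exact hF2 0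
    | succ m => rw [hrs]; exact hF2 _
  have hsucc : ∀ m, (r m).2 < (r (m + 1)).1 := by
    intro m
    rw [hrs]
    exact lt_of_lt_of_le (Nat.lt_succ_self _) (hF1 _)
  have hchain : ∀ m m', m < m' → (r m).2 < (r m').1 := by
    intro m m' h
    induction m' with
    | zero => omega
    | succ m' ih =>
      rcases Nat.lt_succ_iff_lt_or_eq.1 h with h' | h'
      · exact lt_trans (ih h') (lt_trans (hlt m') (hsucc m'))
      · subst h'; exact hsucc m
  refine ⟨fun m => T (r m).1 ∪ T (r m).2, ?_, ?_, ?_⟩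
  · intro m
    have hdisj : Disjoint (T (r m).1) (T (r m).2) := by
      rw [Finset.disjoint_left]
      intro a ha ha'
      exact lt_irrefl a (hord _ _ (hlt m) a ha a ha')
    rw [Finset.card_union_of_disjoint hdisj, hcard, hcard]
    ring
  · intro m m' h i hi j hj
    rcases Finset.mem_union.1 hi with hi' | hi' <;>
      rcases Finset.mem_union.1 hj with hj' | hj'
    · exact hord _ _ (lt_trans (hlt m) (hchain m m' h)) i hi' j hj'
    · exact hord _ _ (lt_trans (lt_trans (hlt m) (hchain m m' h)) (hlt m')) i hi' j hj'
    · exact hord _ _ (hchain m m' h) i hi' j hj'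
    · exact hord _ _ (lt_trans (hchain m m' h) (hlt m')) i hi' j hj'
  · intro m
    have : (⋂ i ∈ ((T (r m).1 ∪ T (r m).2 : Finset ℕ) : Set ℕ), A i)
        = B (r m).1 ∩ B (r m).2 := by
      rw [Finset.coe_union, Set.biInter_union]
    obtain ⟨m0, hm0⟩ := hrF m
    rw [this, hm0]
    exact hF3 m0
lemma iter_lemma {X : Type*} [MeasurableSpace X] (μ : Measure X)
    [IsProbabilityMeasure μ] (A : ℕ → Set X) (hA : ∀ i, MeasurableSet (A i)) :
    ∀ s : ℕ, ∀ ε : ℝ, 0 < ε → ε ≤ 1 / 2 → ∀ c : ℕ, ∀ T : ℕ → Finset ℕ,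
      (∀ m, (T m).card = c) →
      (∀ m m', m < m' → ∀ i ∈ T m, ∀ j ∈ T m', i < j) →
      (∀ m, ε ≤ (μ (⋂ i ∈ (T m : Set ℕ), A i)).toReal) →
      ∃ T' : ℕ → Finset ℕ, (∀ m, (T' m).card = 2 ^ s * c) ∧
        ∀ m, ε ^ 3 ^ s ≤ (μ (⋂ i ∈ (T' m : Set ℕ), A i)).toReal := by
  intro s
  induction s with
  | zero =>
    intro ε h0 h1 c T hcard hord hmeas
    exact ⟨T, fun m => by rw [hcard]; ring, fun m => by simpa using hmeas m⟩
  | succ s ih =>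
    intro ε h0 h1 c T hcard hord hmeas
    obtain ⟨T₁, hcard₁, hord₁, hmeas₁⟩ :=
      step_lemma μ A hA h0 h1 c T hcard hord hmeas
    have h0' : 0 < ε ^ 3 := pow_pos h0 3
    have h1' : ε ^ 3 ≤ 1 / 2 := le_trans (pow_le_of_le_one h0.le (by linarith) (by norm_num)) h1
    obtain ⟨T', hcard', hmeas'⟩ := ih (ε ^ 3) h0' h1' (2 * c) T₁ hcard₁ hord₁ hmeas₁
    refine ⟨T', fun m => by rw [hcard' m]; ring, fun m => ?_⟩
    have := hmeas' m
    rwa [← pow_mul, ← pow_succ'] at this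

theorem k_fold_intersection_lemma {X : Type*} [MeasurableSpace X] (μ : Measure X)
    [IsProbabilityMeasure μ] (ε : ℝ) (h0 : 0 < ε) (h1 : ε ≤ 1 / 2)
    (A : ℕ → Set X) (hA : ∀ i, MeasurableSet (A i))
    (hε : ∀ i, (μ (A i)).toReal ≥ ε) (k : ℕ) (hk : 1 ≤ k) :
    ∃ s : Finset ℕ, s.card = k ∧
      (μ (⋂ i ∈ (s : Set ℕ), A i)).toReal ≥ ε ^ (3 ^ (k - 1)) := by
  obtain ⟨T', hcard', hmeas'⟩ := iter_lemma μ A hA (k - 1) ε h0 h1 1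
    (fun m => {m}) (fun m => rfl)
    (by intro m m' h i hi j hj
        simp only [Finset.mem_singleton] at hi hj
        omega)
    (by intro m
        simpa using hε m)
  have hk2 : k ≤ (T' 0).card := by
    rw [hcard' 0, mul_one]
    have := Nat.lt_two_pow_self (n := k - 1)
    omega
  obtain ⟨t, hts, htcard⟩ := Finset.exists_subset_card_eq hk2
  refine ⟨t, htcard, ?_⟩
  have hsub : (⋂ i ∈ ((T' 0 : Finset ℕ) : Set ℕ), A i) ⊆ ⋂ i ∈ (t : Set ℕ), A i := by
    refine Set.biInter_subset_biInter_left ?_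
    exact fun i hi => hts hi
  have hmono := measure_mono (μ := μ) hsub
  have := ENNReal.toReal_mono (measure_ne_top μ _) hmono
  exact le_trans (hmeas' 0) this
end

section
/- If X is a finite set, A₁,…,Aₙ ⊆ X, and k is an integer with every intersection of k distinct A_i's empty (k-inconsistency), and each |A_i| ≥ |X|/M for a positive integer M, then n is bounded: n < some explicit function of M and k (in particular no infinite such family exists and n cannot exceed the bound forced by μ(⋂_{j=1}^k A_{i_j}) ≥ |X|/M^(3^(k−1)) > 0 for some k indices once n is large enough). -/
theorem k_inconsistent_family_bound {α : Type*} [DecidableEq α] (X : Finset α)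
    (hX : X.Nonempty) (M : ℕ) (hM : 0 < M) (k : ℕ) (hk : 1 ≤ k)
    (n : ℕ) (A : Fin n → Finset α) (hsub : ∀ i, A i ⊆ X)
    (hsize : ∀ i, M * (A i).card ≥ X.card)
    (hincon : ∀ s : Finset (Fin n), s.card = k →
      (⋂ i ∈ (s : Set (Fin n)), (A i : Set α)) = ∅) :
    n ≤ M * (k - 1) := by
  -- each x lies in at most k-1 sets
  have hcount : ∀ x ∈ X, (Finset.univ.filter (fun i => x ∈ A i)).card ≤ k - 1 := by
    intro x hx
    by_contra h
    push_neg at h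
    have hk' : k ≤ (Finset.univ.filter (fun i => x ∈ A i)).card := by omega
    obtain ⟨s, hs, hsc⟩ := Finset.exists_subset_card_eq hk'
    have := hincon s hsc
    have hxmem : x ∈ ⋂ i ∈ (s : Set (Fin n)), (A i : Set α) := by
      simp only [Set.mem_iInter]
      intro i hi
      have := hs hi
      simp only [Finset.mem_filter] at this
      exact this.2
    rw [this] at hxmem
    exact hxmem
  have hswap : ∑ i : Fin n, (A i).card = ∑ x ∈ X, (Finset.univ.filter (fun i => x ∈ A i)).card := by
    have h1 : ∀ i, (A i).card = ∑ x ∈ X, if x ∈ A i then 1 else 0 := by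
      intro i
      rw [← Finset.card_filter]
      congr 1
      rw [Finset.filter_mem_eq_inter, Finset.inter_eq_right.mpr (hsub i)]
    have h2 : ∀ x, (Finset.univ.filter (fun i => x ∈ A i)).card
        = ∑ i : Fin n, if x ∈ A i then 1 else 0 := fun x => Finset.card_filter _ _
    simp only [h1, h2]
    exact Finset.sum_comm
  have hlow : n * X.card ≤ M * ∑ i : Fin n, (A i).card := by
    rw [Finset.mul_sum]
    calc n * X.card = ∑ _i : Fin n, X.card := by simp [mul_comm]
    _ ≤ ∑ i : Fin n, M * (A i).card := Finset.sum_le_sum fun i _ => hsize i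
  have hhigh : ∑ x ∈ X, (Finset.univ.filter (fun i => x ∈ A i)).card ≤ (k - 1) * X.card := by
    calc ∑ x ∈ X, (Finset.univ.filter (fun i => x ∈ A i)).card
        ≤ ∑ _x ∈ X, (k - 1) := Finset.sum_le_sum hcount
    _ = (k - 1) * X.card := by rw [Finset.sum_const, smul_eq_mul, mul_comm]
  have hXc : 0 < X.card := Finset.card_pos.mpr hX
  have : n * X.card ≤ M * ((k - 1) * X.card) := by
    calc n * X.card ≤ M * ∑ i : Fin n, (A i).card := hlow
    _ = M * ∑ x ∈ X, (Finset.univ.filter (fun i => x ∈ A i)).card := by rw [hswap]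
    _ ≤ M * ((k - 1) * X.card) := Nat.mul_le_mul_left M hhigh
  rw [← mul_assoc] at this
  exact Nat.le_of_mul_le_mul_right this hXc
end
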